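/- Let g ∈ R^d, H ∈ R^{d×d} symmetric, θ > 0, and let h* be a global minimizer of m(h) = ⟨g,h⟩ + (1/2)⟨Hh,h⟩ + (θ/6)‖h‖^3. Then H + (θ/2)‖h*‖ I is positive semidefinite. -/

import Mathlib

open RealInnerProductSpace
open scoped Matrix

private lemma eps_le_aux {X C : ℝ} (h : ∀ s : ℝ, 0 < s → s ≤ 1 → X ≤ s * C) : X ≤ 0 := by
  rcases le_or_gt C 0 with hC | hC
  · have := h 1 one_pos le_rfl; linarith
  · refine le_of_forall_pos_le_add fun ε hε => ?_
    have hs : 0 < min 1 (ε / C) := lt_min one_pos (div_pos hε hC)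
    have h2 := h _ hs (min_le_left _ _)
    have h3 : min 1 (ε / C) * C ≤ (ε / C) * C :=
      mul_le_mul_of_nonneg_right (min_le_right _ _) hC.le
    rw [div_mul_cancel₀ _ hC.ne'] at h3
    linarith

private lemma cube_bound' {a n : ℝ} (ha : 0 ≤ a) (hn : 0 ≤ n) (u : ℝ)
    (hu : n ^ 2 = a ^ 2 + u) :
    4 * a * n ^ 3 ≤ 4 * a ^ 4 + 6 * a ^ 2 * u + 3 * u ^ 2 := by
  have h : u = n ^ 2 - a ^ 2 := by linarith
  subst h
  nlinarith [sq_nonneg (n - a), sq_nonneg (n + a), mul_nonneg (mul_nonneg hn hn) hn,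
    mul_nonneg ha hn, mul_nonneg (mul_nonneg ha hn) hn,
    mul_nonneg (sq_nonneg (n - a)) hn, mul_nonneg (sq_nonneg (n - a)) ha]

private lemma sA {θ s X q R : ℝ} (hθ : 0 < θ) (hs : 0 < s) (hs1 : s ≤ 1) (hR : 0 ≤ R)
    (hk : 0 ≤ -(s * q) + 1 / 2 * (s ^ 2 * X) + θ / 6 * (s ^ 3 * R)) :
    q ≤ s * (1 / 2 * X + θ / 6 * R) := by
  have hs3 : s ^ 3 ≤ s ^ 2 := by nlinarith
  have hint : 0 ≤ θ * (s ^ 2 - s ^ 3) * R :=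
    mul_nonneg (mul_nonneg hθ.le (by linarith)) hR
  have h2 : s * q ≤ s * (s * (1 / 2 * X + θ / 6 * R)) := by nlinarith [hk, hint]
  exact le_of_mul_le_mul_left h2 hs

private lemma sB {θ a s p q X n3 : ℝ} (hθ : 0 < θ) (ha : 0 < a) (hs : 0 < s) (hs1 : s ≤ 1)
    (hq : 0 ≤ q)
    (hcb : 4 * a * n3 ≤ 4 * a ^ 4 + 6 * a ^ 2 * (-2 * s * p + s ^ 2 * q)
      + 3 * (-2 * s * p + s ^ 2 * q) ^ 2)
    (hk : 0 ≤ (-(s * q) - θ / 2 * a * (-(s * p))) + 1 / 2 * (s ^ 2 * X)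
      + θ / 6 * (n3 - a ^ 3)) :
    a * q ≤ s * (1 / 2 * a * X + 1 / 4 * θ * a ^ 2 * q + θ * p ^ 2 + 1 / 4 * θ * q ^ 2) := by
  have hs2 : s ^ 2 ≤ 1 := by nlinarith
  have e8 : (-2 * p + s * q) ^ 2 ≤ 8 * p ^ 2 + 2 * q ^ 2 := by
    nlinarith [sq_nonneg (2 * p + s * q), mul_nonneg (sub_nonneg.2 hs2) (sq_nonneg q)]
  have h1 : 0 ≤ θ * ((4 * a ^ 4 + 6 * a ^ 2 * (-2 * s * p + s ^ 2 * q)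
      + 3 * (-2 * s * p + s ^ 2 * q) ^ 2) - 4 * a * n3) :=
    mul_nonneg hθ.le (by linarith)
  have h2 : 0 ≤ θ * (s ^ 2 * (8 * p ^ 2 + 2 * q ^ 2) - (-2 * p + s * q) ^ 2 * s ^ 2) :=
    mul_nonneg hθ.le (by nlinarith [mul_le_mul_of_nonneg_left e8 (sq_nonneg s)])
  have h3 : 0 ≤ (24 * a) * ((-(s * q) - θ / 2 * a * (-(s * p))) + 1 / 2 * (s ^ 2 * X)
      + θ / 6 * (n3 - a ^ 3)) :=
    mul_nonneg (by linarith) hk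
  have step : s * (24 * (a * q)) ≤ s * (s * (24 * (1 / 2 * a * X + 1 / 4 * θ * a ^ 2 * q
      + θ * p ^ 2 + 1 / 4 * θ * q ^ 2))) := by nlinarith [h1, h2, h3]
  have h4 := le_of_mul_le_mul_left step hs
  nlinarith [h4]

private lemma sC {θ a s b Qw n3 : ℝ} (hθ : 0 < θ) (ha : 0 < a) (hs : 0 < s) (hs1 : s ≤ 1)
    (hb : 0 ≤ b)
    (hcb : 4 * a * n3 ≤ 4 * a ^ 4 + 6 * a ^ 2 * (s ^ 2 * b) + 3 * (s ^ 2 * b) ^ 2)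
    (hk : 0 ≤ 1 / 2 * (s ^ 2 * Qw) + θ / 6 * (n3 - a ^ 3)) :
    -(12 * a * (Qw + θ / 2 * a * b)) ≤ s * (3 * θ * b ^ 2) := by
  have h1 : 0 ≤ θ * ((4 * a ^ 4 + 6 * a ^ 2 * (s ^ 2 * b) + 3 * (s ^ 2 * b) ^ 2)
      - 4 * a * n3) := mul_nonneg hθ.le (by linarith)
  have h3 : 0 ≤ (24 * a) * (1 / 2 * (s ^ 2 * Qw) + θ / 6 * (n3 - a ^ 3)) :=
    mul_nonneg (by linarith) hk
  have key2 : s ^ 2 * 0 ≤ s ^ 2 * (12 * a * Qw + 6 * θ * a ^ 2 * b + 3 * θ * (s ^ 2 * b ^ 2)) := by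
    nlinarith [h1, h3]
  have key3 := le_of_mul_le_mul_left key2 (by positivity : (0:ℝ) < s ^ 2)
  have hs2 : s ^ 2 ≤ s := by nlinarith
  nlinarith [key3, mul_nonneg (mul_nonneg hθ.le (by linarith : (0:ℝ) ≤ s - s ^ 2))
    (mul_nonneg hb hb)]

private lemma sD {θ s Qw W3 : ℝ} (hθ : 0 < θ) (hs : 0 < s) (hs1 : s ≤ 1) (hW : 0 ≤ W3)
    (hk : 0 ≤ 1 / 2 * (s ^ 2 * Qw) + θ / 6 * (s ^ 3 * W3)) :
    -Qw ≤ s * (θ / 3 * W3) := by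
  have h2 : s ^ 2 * (-Qw) ≤ s ^ 2 * (s * (θ / 3 * W3)) := by nlinarith [hk]
  exact le_of_mul_le_mul_left h2 (by positivity)

private lemma sE {t b c l Qw : ℝ} (ht : 0 < t) (htb : t * b = -2 * c)
    (hk : 0 ≤ -(l * (t * c)) + 1 / 2 * (t ^ 2 * Qw)) : 0 ≤ Qw + l * b := by
  have hc : c = -(t * b) / 2 := by linarith
  rw [hc] at hk
  have h2 : t ^ 2 * 0 ≤ t ^ 2 * (Qw + l * b) := by nlinarith [hk]
  exact le_of_mul_le_mul_left h2 (by positivity)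

theorem stmt_7 {d : ℕ} (g : EuclideanSpace ℝ (Fin d)) (H : Matrix (Fin d) (Fin d) ℝ)
    (hH : H.IsSymm) (θ : ℝ) (hθ : 0 < θ) (hstar : EuclideanSpace ℝ (Fin d))
    (hmin : ∀ h : EuclideanSpace ℝ (Fin d),
      ⟪g, hstar⟫ + (1 / 2) * ⟪(Matrix.toEuclideanCLM (𝕜 := ℝ) H) hstar, hstar⟫
          + (θ / 6) * ‖hstar‖ ^ 3 ≤
        ⟪g, h⟫ + (1 / 2) * ⟪(Matrix.toEuclideanCLM (𝕜 := ℝ) H) h, h⟫ + (θ / 6) * ‖h‖ ^ 3) :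
    (H + ((θ / 2) * ‖hstar‖) • (1 : Matrix (Fin d) (Fin d) ℝ)).PosSemidef := by
  obtain ⟨A, hA⟩ : ∃ A, A = Matrix.toEuclideanCLM (𝕜 := ℝ) H := ⟨_, rfl⟩
  obtain ⟨l, hl⟩ : ∃ l : ℝ, l = (θ / 2) * ‖hstar‖ := ⟨_, rfl⟩
  rw [← hA] at hmin
  have hH' : H.IsHermitian := by
    rwa [Matrix.IsHermitian, Matrix.conjTranspose_eq_transpose_of_trivial]
  have hsym : ∀ x y : EuclideanSpace ℝ (Fin d), ⟪A x, y⟫ = ⟪x, A y⟫ := by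
    have h1 := Matrix.isHermitian_iff_isSymmetric.mp hH'
    intro x y
    have h2 : (A : EuclideanSpace ℝ (Fin d) →ₗ[ℝ] EuclideanSpace ℝ (Fin d))
        = Matrix.toEuclideanLin H := by
      rw [hA]; exact Matrix.coe_toEuclideanCLM_eq_toEuclideanLin H
    have := h1 x y
    rw [← h2] at this
    exact this
  have key : ∀ v : EuclideanSpace ℝ (Fin d),
      0 ≤ ⟪g, v⟫ + ⟪A hstar, v⟫ + (1/2) * ⟪A v, v⟫
        + θ/6 * (‖hstar + v‖^3 - ‖hstar‖^3) := by
    intro v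
    have h0 := hmin (hstar + v)
    have e1 : ⟪g, hstar + v⟫ = ⟪g, hstar⟫ + ⟪g, v⟫ := inner_add_right _ _ _
    have e2 : ⟪A (hstar + v), hstar + v⟫
        = ⟪A hstar, hstar⟫ + 2 * ⟪A hstar, v⟫ + ⟪A v, v⟫ := by
      rw [map_add, inner_add_left, inner_add_right, inner_add_right,
        hsym v hstar, real_inner_comm v (A hstar)]
      ring
    rw [e1, e2] at h0
    linarith
  -- first-order condition
  have hr : g + A hstar + l • hstar = 0 := by
    obtain ⟨r, hrdef⟩ : ∃ r, r = g + A hstar + l • hstar := ⟨_, rfl⟩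
    suffices hrn : ‖r‖ ^ 2 ≤ 0 by
      have : ‖r‖ = 0 := by nlinarith [norm_nonneg r]
      rw [← hrdef]; exact norm_eq_zero.mp this
    rcases eq_or_lt_of_le (norm_nonneg hstar) with ha0 | ha
    · -- hstar = 0
      have hs0 : hstar = 0 := by rw [← norm_le_zero_iff]; rw [← ha0]
      have hrg : r = g := by rw [hrdef, hs0]; simp
      apply eps_le_aux (C := 1/2 * ⟪A r, r⟫ + θ/6 * ‖r‖^3)
      intro s hs hs1
      have hk := key (s • (-r))
      have e1 : ⟪g, s • (-r)⟫ = -(s * ‖r‖^2) := by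
        rw [real_inner_smul_right, inner_neg_right, hrg, real_inner_self_eq_norm_sq]; ring
      have e2 : ⟪A hstar, s • (-r)⟫ = 0 := by rw [hs0]; simp
      have e3 : ⟪A (s • (-r)), s • (-r)⟫ = s^2 * ⟪A r, r⟫ := by
        rw [map_smul, map_neg, real_inner_smul_left, real_inner_smul_right,
          inner_neg_left, inner_neg_right]
        ring
      have e4 : ‖hstar + s • (-r)‖^3 - ‖hstar‖^3 = s^3 * ‖r‖^3 := by
        rw [hs0]
        rw [zero_add, norm_smul, norm_neg, norm_zero]
        rw [Real.norm_eq_abs, abs_of_pos hs]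
        ring
      rw [e1, e2, e3, e4] at hk
      exact sA hθ hs hs1 (by positivity) (by linarith)
    · -- ‖hstar‖ > 0
      apply eps_le_aux (C := 1/2 * ⟪A r, r⟫ + 1/4 * θ * ‖hstar‖^2 * ‖r‖^2/‖hstar‖
        + (θ * ⟪hstar, r⟫^2 + 1/4 * θ * (‖r‖^2)^2)/‖hstar‖)
      intro s hs hs1
      have hk := key (s • (-r))
      have ec : ⟪hstar, s • (-r)⟫ = -(s * ⟪hstar, r⟫) := by
        rw [real_inner_smul_right, inner_neg_right]; ring
      have eb : ‖s • (-r)‖^2 = s^2 * ‖r‖^2 := by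
        rw [norm_smul, norm_neg, Real.norm_eq_abs, abs_of_pos hs]; ring
      have hnsq : ‖hstar + s • (-r)‖^2
          = ‖hstar‖^2 + (-2 * s * ⟪hstar, r⟫ + s^2 * ‖r‖^2) := by
        rw [norm_add_sq_real, ec, eb]; ring
      have hcb := cube_bound' ha.le (norm_nonneg (hstar + s • (-r))) _ hnsq
      have e1 : ⟪g, s • (-r)⟫ + ⟪A hstar, s • (-r)⟫
          = -(s * ‖r‖^2) - θ/2 * ‖hstar‖ * (-(s * ⟪hstar, r⟫)) := by
        have hga : g + A hstar = r - l • hstar := by rw [hrdef]; module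
        have h2 : ⟪g, s • (-r)⟫ + ⟪A hstar, s • (-r)⟫ = ⟪g + A hstar, s • (-r)⟫ :=
          (inner_add_left _ _ _).symm
        rw [h2, hga, inner_sub_left, real_inner_smul_left, ec,
          real_inner_smul_right, inner_neg_right, real_inner_self_eq_norm_sq, hl]
        ring
      have e3 : ⟪A (s • (-r)), s • (-r)⟫ = s^2 * ⟪A r, r⟫ := by
        rw [map_smul, map_neg, real_inner_smul_left, real_inner_smul_right,
          inner_neg_left, inner_neg_right]
        ring
      rw [e3] at hk
      have hkk : 0 ≤ (-(s * ‖r‖^2) - θ/2 * ‖hstar‖ * (-(s * ⟪hstar, r⟫)))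
          + 1/2 * (s^2 * ⟪A r, r⟫) + θ/6 * (‖hstar + s • (-r)‖^3 - ‖hstar‖^3) := by
        rw [← e1]; linarith
      have hmain := sB hθ ha hs hs1 (by positivity) hcb hkk
      -- divide by ‖hstar‖
      have h5 : ‖hstar‖ * ‖r‖^2 ≤ ‖hstar‖ * (s * (1/2 * ⟪A r, r⟫
          + 1/4 * θ * ‖hstar‖^2 * ‖r‖^2/‖hstar‖
          + (θ * ⟪hstar, r⟫^2 + 1/4 * θ * (‖r‖^2)^2)/‖hstar‖)) := by
        have hCeq : ‖hstar‖ * (s * (1/2 * ⟪A r, r⟫ + 1/4 * θ * ‖hstar‖^2 * ‖r‖^2/‖hstar‖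
            + (θ * ⟪hstar, r⟫^2 + 1/4 * θ * (‖r‖^2)^2)/‖hstar‖))
            = s * (1/2 * ‖hstar‖ * ⟪A r, r⟫ + 1/4 * θ * ‖hstar‖^2 * ‖r‖^2
            + θ * ⟪hstar, r⟫^2 + 1/4 * θ * (‖r‖^2)^2) := by
          field_simp
          ring
        rw [hCeq]
        exact hmain
      exact le_of_mul_le_mul_left h5 ha
  -- clean key using first-order condition
  have key2 : ∀ v : EuclideanSpace ℝ (Fin d),
      0 ≤ -(l * ⟪hstar, v⟫) + 1/2 * ⟪A v, v⟫ + θ/6 * (‖hstar + v‖^3 - ‖hstar‖^3) := by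
    intro v
    have hk := key v
    have hga : g + A hstar = -(l • hstar) := by
      have := hr; rw [add_eq_zero_iff_eq_neg] at this; exact this
    have e1 : ⟪g, v⟫ + ⟪A hstar, v⟫ = -(l * ⟪hstar, v⟫) := by
      rw [← inner_add_left, hga, inner_neg_left, real_inner_smul_left]
    linarith
  have main : ∀ w : EuclideanSpace ℝ (Fin d),
      ⟪hstar, w⟫ ≤ 0 → 0 ≤ ⟪A w, w⟫ + l * ‖w‖^2 := by
    intro w hc
    rcases eq_or_lt_of_le hc with hc0 | hc
    · -- orthogonal case
      rcases eq_or_lt_of_le (norm_nonneg hstar) with ha0 | ha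
      · -- hstar = 0
        have hs0 : hstar = 0 := by rw [← norm_le_zero_iff]; rw [← ha0]
        have hl0 : l = 0 := by rw [hl, ← ha0]; ring
        have hQ : -⟪A w, w⟫ ≤ 0 := by
          apply eps_le_aux (C := θ/3 * ‖w‖^3)
          intro s hs hs1
          have hk := key2 (s • w)
          have e3 : ⟪A (s • w), s • w⟫ = s^2 * ⟪A w, w⟫ := by
            rw [map_smul, real_inner_smul_left, real_inner_smul_right]; ring
          have e4 : ‖hstar + s • w‖^3 - ‖hstar‖^3 = s^3 * ‖w‖^3 := by
            rw [hs0, zero_add, norm_smul, norm_zero, Real.norm_eq_abs, abs_of_pos hs]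
            ring
          rw [e3, e4, hl0] at hk
          exact sD hθ hs hs1 (by positivity) (by linarith)
        linarith [hQ, hl0, mul_nonneg (le_of_eq hl0.symm) (sq_nonneg ‖w‖)]
      · -- hstar ≠ 0
        have hQ : -(12 * ‖hstar‖ * (⟪A w, w⟫ + θ/2 * ‖hstar‖ * ‖w‖^2)) ≤ 0 := by
          apply eps_le_aux (C := 3 * θ * (‖w‖^2)^2)
          intro s hs hs1
          have hk := key2 (s • w)
          have e3 : ⟪A (s • w), s • w⟫ = s^2 * ⟪A w, w⟫ := by
            rw [map_smul, real_inner_smul_left, real_inner_smul_right]; ring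
          have ec : ⟪hstar, s • w⟫ = 0 := by
            rw [real_inner_smul_right, hc0, mul_zero]
          have hnsq : ‖hstar + s • w‖^2 = ‖hstar‖^2 + s^2 * ‖w‖^2 := by
            rw [norm_add_sq_real, ec, norm_smul, Real.norm_eq_abs, abs_of_pos hs]
            ring
          have hcb := cube_bound' ha.le (norm_nonneg (hstar + s • w)) _ hnsq
          rw [e3, ec] at hk
          exact sC hθ ha hs hs1 (sq_nonneg ‖w‖) hcb (by linarith)
        have h12 : (0:ℝ) < 12 * ‖hstar‖ := by linarith
        rw [hl]
        nlinarith [hQ]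
    · -- strict case: move to the sphere
      have hw : w ≠ 0 := by
        intro h0
        rw [h0, inner_zero_right] at hc
        exact lt_irrefl 0 hc
      have hb : (0:ℝ) < ‖w‖^2 := by
        have := norm_pos_iff.mpr hw
        positivity
      obtain ⟨t, ht⟩ : ∃ t : ℝ, t = -2 * ⟪hstar, w⟫ / ‖w‖^2 := ⟨_, rfl⟩
      have htpos : 0 < t := by
        rw [ht]; apply div_pos (by linarith) hb
      have htb : t * ‖w‖^2 = -2 * ⟪hstar, w⟫ := by
        rw [ht]; field_simp
      have hn2 : ‖hstar + t • w‖^2 = ‖hstar‖^2 := by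
        rw [norm_add_sq_real, real_inner_smul_right, norm_smul, Real.norm_eq_abs]
        have habs : |t| = t := abs_of_pos htpos
        rw [habs]
        have : 2 * (t * ⟪hstar, w⟫) + (t * ‖w‖)^2 = 0 := by
          have hexp : (t * ‖w‖)^2 = t * (t * ‖w‖^2) := by ring
          rw [hexp, htb]; ring
        linarith
      have hn : ‖hstar + t • w‖ = ‖hstar‖ := by
        rw [← abs_norm (hstar + t • w), ← abs_norm hstar, ← Real.sqrt_sq_eq_abs,
          ← Real.sqrt_sq_eq_abs, hn2]
      have hk := key2 (t • w)
      have e3 : ⟪A (t • w), t • w⟫ = t^2 * ⟪A w, w⟫ := by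
        rw [map_smul, real_inner_smul_left, real_inner_smul_right]; ring
      have ec : ⟪hstar, t • w⟫ = t * ⟪hstar, w⟫ := real_inner_smul_right _ _ _
      rw [e3, ec, hn] at hk
      exact sE htpos htb (by linarith)
  -- bridge to matrices
  apply Matrix.PosSemidef.of_dotProduct_mulVec_nonneg
  · show Matrix.conjTranspose (H + ((θ / 2) * ‖hstar‖) • (1 : Matrix (Fin d) (Fin d) ℝ)) = _
    rw [Matrix.conjTranspose_eq_transpose_of_trivial, Matrix.transpose_add,
      Matrix.transpose_smul, Matrix.transpose_one, hH]
  · intro x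
    obtain ⟨w, hw⟩ : ∃ w : EuclideanSpace ℝ (Fin d), w = (WithLp.equiv 2 (Fin d → ℝ)).symm x :=
      ⟨_, rfl⟩
    have hAw : A w = (WithLp.equiv 2 (Fin d → ℝ)).symm (H *ᵥ x) := by
      rw [hw, hA]
      exact Matrix.toEuclideanCLM_toLp H x
    have hdot : dotProduct (star x) ((H + ((θ / 2) * ‖hstar‖) • (1 : Matrix (Fin d) (Fin d) ℝ)) *ᵥ x)
        = ⟪A w, w⟫ + l * ‖w‖^2 := by
      rw [star_trivial, Matrix.add_mulVec, Matrix.smul_mulVec, Matrix.one_mulVec,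
        dotProduct_add, dotProduct_smul]
      congr 1
      · rw [hAw, hw]
        simp only [PiLp.inner_apply, RCLike.inner_apply, WithLp.equiv_symm_apply, WithLp.ofLp_toLp,
          starRingEnd_apply, star_trivial]
        rw [dotProduct]
      · rw [smul_eq_mul, hl]
        congr 1
        rw [← real_inner_self_eq_norm_sq, hw]
        simp only [PiLp.inner_apply, RCLike.inner_apply, WithLp.equiv_symm_apply, WithLp.ofLp_toLp,
          starRingEnd_apply, star_trivial]
        rfl
    rw [hdot]
    rcases le_or_gt ⟪hstar, w⟫ 0 with h | h
    · exact main w h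
    · have h2 := main (-w) (by rw [inner_neg_right]; linarith)
      rw [map_neg, inner_neg_neg, norm_neg] at h2
      exact h2
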